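/- arXiv:1911.00047 — 2 statements merged into one kernel-verified Lean document; each statement's English description precedes it below -/
import Mathlib

section
/- Let p ≥ 1 be real, and let F : [0,v₀] → ℝ be nonnegative, differentiable, with F'(t) ≤ C·F(t) + p·F(t)^((p-1)/p)·g(t) for all t, where C ≥ 0 and g : [0,v₀] → ℝ is continuous and nonnegative. Then F(v)^(1/p) ≤ e^(C v / p) · ( F(0)^(1/p) + ∫₀^v g(s) ds ) for all v ∈ [0,v₀]. -/
open intervalIntegral

/-- Abstract ODE form of the transport `L^p` estimate: if `F ≥ 0` is differentiable
with `F' ≤ C F + p F^((p-1)/p) g` on `[0, v₀]`, where `C ≥ 0` and `g` is continuous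
and nonnegative, then `F(v)^(1/p) ≤ exp(C v / p) (F(0)^(1/p) + ∫₀^v g)`. -/
theorem transport_Lp_ode_estimate
    (p C v₀ : ℝ) (hp : 1 ≤ p) (hC : 0 ≤ C) (F g : ℝ → ℝ)
    (hF0 : ∀ t ∈ Set.Icc 0 v₀, 0 ≤ F t)
    (hFdiff : ∀ t ∈ Set.Icc 0 v₀, DifferentiableAt ℝ F t)
    (hg : ContinuousOn g (Set.Icc 0 v₀))
    (hg0 : ∀ t ∈ Set.Icc 0 v₀, 0 ≤ g t)
    (hineq : ∀ t ∈ Set.Icc 0 v₀,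
      deriv F t ≤ C * F t + p * F t ^ ((p - 1) / p) * g t) :
    ∀ v ∈ Set.Icc 0 v₀,
      F v ^ (1 / p) ≤ Real.exp (C * v / p) * (F 0 ^ (1 / p) + ∫ s in (0:ℝ)..v, g s) := by
  rintro v ⟨hv0, hvv₀⟩
  have hv₀ : (0:ℝ) ≤ v₀ := le_trans hv0 hvv₀
  have hp0 : (0:ℝ) < p := lt_of_lt_of_le one_pos hp
  have hF0mem : (0:ℝ) ∈ Set.Icc 0 v₀ := ⟨le_refl 0, hv₀⟩
  have hvmem : v ∈ Set.Icc 0 v₀ := ⟨hv0, hvv₀⟩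
  -- the weighted integrand
  set h : ℝ → ℝ := fun s => Real.exp (-(C * s / p)) * g s with hh
  have hhcont : ContinuousOn h (Set.Icc 0 v₀) := by
    apply ContinuousOn.mul _ hg
    exact (Real.continuous_exp.comp (by continuity)).continuousOn
  have hgint : IntervalIntegrable g MeasureTheory.volume 0 v := by
    apply ContinuousOn.intervalIntegrable
    apply hg.mono
    rw [Set.uIcc_of_le hv0]
    exact Set.Icc_subset_Icc le_rfl hvv₀
  have hhint : IntervalIntegrable h MeasureTheory.volume 0 v := by
    apply ContinuousOn.intervalIntegrable
    apply hhcont.mono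
    rw [Set.uIcc_of_le hv0]
    exact Set.Icc_subset_Icc le_rfl hvv₀
  -- ∫ h ≤ ∫ g
  have hIle : (∫ s in (0:ℝ)..v, h s) ≤ ∫ s in (0:ℝ)..v, g s := by
    apply intervalIntegral.integral_mono_on hv0 hhint hgint
    intro x hx
    have hx' : x ∈ Set.Icc 0 v₀ := ⟨hx.1, le_trans hx.2 hvv₀⟩
    have h1 : Real.exp (-(C * x / p)) ≤ 1 := by
      rw [Real.exp_le_one_iff]
      have : 0 ≤ C * x / p := div_nonneg (mul_nonneg hC hx.1) (le_of_lt hp0)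
      linarith
    calc Real.exp (-(C * x / p)) * g x ≤ 1 * g x :=
          mul_le_mul_of_nonneg_right h1 (hg0 x hx')
      _ = g x := one_mul _
  -- Key estimate for each ε > 0
  have key : ∀ ε : ℝ, 0 < ε →
      F v ^ (1 / p) ≤ Real.exp (C * v / p) * ((F 0 + ε) ^ (1 / p) + ∫ s in (0:ℝ)..v, g s) := by
    intro ε hε
    set H : ℝ → ℝ := fun t =>
      Real.exp (-(C * t / p)) * (F t + ε) ^ (1 / p) - ∫ s in (0:ℝ)..t, h s with hH
    have hFcont : ContinuousOn F (Set.Icc 0 v₀) := fun t ht =>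
      (hFdiff t ht).continuousAt.continuousWithinAt
    -- continuity of H
    have hHcont : ContinuousOn H (Set.Icc 0 v₀) := by
      apply ContinuousOn.sub
      · apply ContinuousOn.mul
        · exact (Real.continuous_exp.comp (by continuity)).continuousOn
        · apply ContinuousOn.rpow_const (hFcont.add continuousOn_const)
          intro t ht
          exact Or.inr (le_of_lt (one_div_pos.mpr hp0))
      · have := intervalIntegral.continuousOn_primitive_interval
          (f := h) (a := 0) (b := v₀) (μ := MeasureTheory.volume) ?_
        · rwa [Set.uIcc_of_le hv₀] at this
        · rw [Set.uIcc_of_le hv₀]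
          exact hhcont.integrableOn_compact isCompact_Icc
    -- derivative of H on the interior
    have hderiv : ∀ t ∈ Set.Ioo (0:ℝ) v₀,
        HasDerivAt H (-(C / p) * Real.exp (-(C * t / p)) * (F t + ε) ^ (1 / p)
          + Real.exp (-(C * t / p)) * (deriv F t * (1 / p) * (F t + ε) ^ (1 / p - 1))
          - h t) t := by
      intro t ht
      have htmem : t ∈ Set.Icc 0 v₀ := ⟨le_of_lt ht.1, le_of_lt ht.2⟩
      have hFt : 0 < F t + ε := by have := hF0 t htmem; linarith
      have hA : HasDerivAt (fun t => Real.exp (-(C * t / p))) (-(C / p) * Real.exp (-(C * t / p))) t := by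
        have h1 : HasDerivAt (fun t : ℝ => -(C * t / p)) (-(C / p)) t := by
          have heq : (fun t : ℝ => -(C * t / p)) = fun t : ℝ => -(C / p) * t := by
            funext s; ring
          rw [heq]
          simpa using (hasDerivAt_id t).const_mul (-(C / p))
        simpa [mul_comm] using h1.exp
      have hB : HasDerivAt (fun t => (F t + ε) ^ (1 / p))
          (deriv F t * (1 / p) * (F t + ε) ^ (1 / p - 1)) t := by
        have h1 : HasDerivAt (fun t => F t + ε) (deriv F t) t :=
          ((hFdiff t htmem).hasDerivAt).add_const ε
        simpa using h1.rpow_const (Or.inl (ne_of_gt hFt))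
      have hI : HasDerivAt (fun u => ∫ s in (0:ℝ)..u, h s) (h t) t := by
        apply intervalIntegral.integral_hasDerivAt_right
        · apply ContinuousOn.intervalIntegrable
          apply hhcont.mono
          rw [Set.uIcc_of_le (le_of_lt ht.1)]
          exact Set.Icc_subset_Icc le_rfl (le_of_lt ht.2)
        · exact (hhcont.mono Set.Ioo_subset_Icc_self).stronglyMeasurableAtFilter
            isOpen_Ioo t ht
        · exact (hhcont.mono Set.Ioo_subset_Icc_self).continuousAt (isOpen_Ioo.mem_nhds ht)
      exact (hA.mul hB).sub hI
    -- deriv H ≤ 0 on interior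
    have hHderiv_nonpos : ∀ t ∈ Set.Ioo (0:ℝ) v₀, deriv H t ≤ 0 := by
      intro t ht
      have htmem : t ∈ Set.Icc 0 v₀ := ⟨le_of_lt ht.1, le_of_lt ht.2⟩
      rw [(hderiv t ht).deriv]
      set a := F t + ε with ha
      have hx : 0 ≤ F t := hF0 t htmem
      have hFt : 0 < a := by positivity
      have hE : 0 < Real.exp (-(C * t / p)) := Real.exp_pos _
      have hgt : 0 ≤ g t := hg0 t htmem
      -- the pointwise inequality
      have hmain : deriv F t * (1 / p) * a ^ (1 / p - 1) ≤ C / p * a ^ (1 / p) + g t := by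
        have hpow_pos : 0 < a ^ (1 / p - 1) := Real.rpow_pos_of_pos hFt _
        have h1 : deriv F t * (1 / p) * a ^ (1 / p - 1)
            ≤ (C * F t + p * F t ^ ((p - 1) / p) * g t) * (1 / p) * a ^ (1 / p - 1) := by
          apply mul_le_mul_of_nonneg_right _ (le_of_lt hpow_pos)
          exact mul_le_mul_of_nonneg_right (hineq t htmem) (le_of_lt (one_div_pos.mpr hp0))
        have h2 : F t * a ^ (1 / p - 1) ≤ a ^ (1 / p) := by
          have heq : a ^ (1 / p) = a * a ^ (1 / p - 1) := by
            have := Real.rpow_add hFt 1 (1 / p - 1)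
            rw [Real.rpow_one] at this
            rw [← this]
            ring_nf
          rw [heq]
          exact mul_le_mul_of_nonneg_right (by linarith) (le_of_lt hpow_pos)
        have h3 : F t ^ ((p - 1) / p) * a ^ (1 / p - 1) ≤ 1 := by
          have hexp : (0:ℝ) ≤ (p - 1) / p := div_nonneg (by linarith) (le_of_lt hp0)
          have hmono : F t ^ ((p - 1) / p) ≤ a ^ ((p - 1) / p) :=
            Real.rpow_le_rpow hx (by linarith) hexp
          have hprod : a ^ ((p - 1) / p) * a ^ (1 / p - 1) = 1 := by
            rw [← Real.rpow_add hFt]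
            have : (p - 1) / p + (1 / p - 1) = 0 := by field_simp; ring
            rw [this, Real.rpow_zero]
          calc F t ^ ((p - 1) / p) * a ^ (1 / p - 1)
              ≤ a ^ ((p - 1) / p) * a ^ (1 / p - 1) :=
                mul_le_mul_of_nonneg_right hmono (le_of_lt hpow_pos)
            _ = 1 := hprod
        have h4 : (C * F t + p * F t ^ ((p - 1) / p) * g t) * (1 / p) * a ^ (1 / p - 1)
            = C / p * (F t * a ^ (1 / p - 1)) + (F t ^ ((p - 1) / p) * a ^ (1 / p - 1)) * g t := by
          field_simp
        rw [h4] at h1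
        have h5 : C / p * (F t * a ^ (1 / p - 1)) ≤ C / p * a ^ (1 / p) :=
          mul_le_mul_of_nonneg_left h2 (by positivity)
        have h6 : (F t ^ ((p - 1) / p) * a ^ (1 / p - 1)) * g t ≤ 1 * g t :=
          mul_le_mul_of_nonneg_right h3 hgt
        linarith
      have hht : h t = Real.exp (-(C * t / p)) * g t := rfl
      rw [hht]
      have := mul_le_mul_of_nonneg_left hmain (le_of_lt hE)
      nlinarith [this]
    -- H is antitone
    have hanti : AntitoneOn H (Set.Icc 0 v₀) := by
      apply antitoneOn_of_deriv_nonpos (convex_Icc 0 v₀) hHcont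
      · intro t ht
        rw [interior_Icc] at ht
        exact ((hderiv t ht).differentiableAt).differentiableWithinAt
      · intro t ht
        rw [interior_Icc] at ht
        exact hHderiv_nonpos t ht
    have hHv : H v ≤ H 0 := hanti hF0mem hvmem hv0
    simp only [hH] at hHv
    rw [intervalIntegral.integral_same] at hHv
    -- unpack
    have hEv : 0 < Real.exp (-(C * v / p)) := Real.exp_pos _
    have step1 : (F v + ε) ^ (1 / p) ≤
        Real.exp (C * v / p) * ((F 0 + ε) ^ (1 / p) + ∫ s in (0:ℝ)..v, h s) := by
      have h0 : Real.exp (-(C * 0 / p)) = 1 := by norm_num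
      rw [h0] at hHv
      have := hHv
      have hexp : Real.exp (C * v / p) * Real.exp (-(C * v / p)) = 1 := by
        rw [← Real.exp_add]; norm_num
      have h2 : Real.exp (-(C * v / p)) * (F v + ε) ^ (1 / p)
          ≤ (F 0 + ε) ^ (1 / p) + ∫ s in (0:ℝ)..v, h s := by linarith
      have h3 := mul_le_mul_of_nonneg_left h2 (le_of_lt (Real.exp_pos (C * v / p)))
      rw [← mul_assoc, hexp, one_mul] at h3
      linarith
    have step2 : F v ^ (1 / p) ≤ (F v + ε) ^ (1 / p) :=
      Real.rpow_le_rpow (hF0 v hvmem) (by linarith) (le_of_lt (one_div_pos.mpr hp0))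
    have step3 : Real.exp (C * v / p) * ((F 0 + ε) ^ (1 / p) + ∫ s in (0:ℝ)..v, h s)
        ≤ Real.exp (C * v / p) * ((F 0 + ε) ^ (1 / p) + ∫ s in (0:ℝ)..v, g s) := by
      apply mul_le_mul_of_nonneg_left _ (le_of_lt (Real.exp_pos _))
      linarith
    linarith
  -- take ε → 0⁺
  have htend : Filter.Tendsto
      (fun ε => Real.exp (C * v / p) * ((F 0 + ε) ^ (1 / p) + ∫ s in (0:ℝ)..v, g s))
      (nhdsWithin 0 (Set.Ioi 0))
      (nhds (Real.exp (C * v / p) * (F 0 ^ (1 / p) + ∫ s in (0:ℝ)..v, g s))) := by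
    apply Filter.Tendsto.const_mul
    apply Filter.Tendsto.add_const
    have h1 : Filter.Tendsto (fun ε : ℝ => F 0 + ε) (nhdsWithin 0 (Set.Ioi 0)) (nhds (F 0)) := by
      have : Filter.Tendsto (fun ε : ℝ => F 0 + ε) (nhds 0) (nhds (F 0 + 0)) :=
        (continuous_const.add continuous_id).tendsto 0
      rw [add_zero] at this
      exact this.mono_left nhdsWithin_le_nhds
    exact (Real.continuousAt_rpow_const (F 0) (1 / p)
      (Or.inr (le_of_lt (one_div_pos.mpr hp0)))).tendsto.comp h1
  apply ge_of_tendsto htend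
  filter_upwards [self_mem_nhdsWithin] with ε hε
  exact key ε hε
end

section
/- Let u : ℝ² → ℝ be a compactly supported C¹ function. Then ‖u‖_{L²(ℝ²)} ≤ C ‖∇u‖_{L¹(ℝ²)} for an absolute constant C (in fact C = 1 works: ‖u‖_{L²} ≤ ‖∂₁u‖_{L¹}^{1/2} ‖∂₂u‖_{L¹}^{1/2} ≤ ‖∇u‖_{L¹}). -/
open MeasureTheory Set ENNReal

noncomputable def kappa : (ℝ × ℝ) ≃L[ℝ] EuclideanSpace ℝ (Fin 2) :=
  (ContinuousLinearEquiv.finTwoArrow ℝ ℝ).symm.trans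
    (PiLp.continuousLinearEquiv 2 ℝ (fun _ : Fin 2 => ℝ)).symm

-- slice compact support
lemma slice_cs {v : ℝ × ℝ → ℝ} (hv : HasCompactSupport v) (s : ℝ) :
    HasCompactSupport (fun t => v (s, t)) := by
  apply HasCompactSupport.intro (hv.image continuous_snd)
  intro t ht
  by_contra h
  exact ht ⟨(s, t), subset_tsupport v h, rfl⟩

lemma slice_cs' {v : ℝ × ℝ → ℝ} (hv : HasCompactSupport v) (t : ℝ) :
    HasCompactSupport (fun s => v (s, t)) := by
  apply HasCompactSupport.intro (hv.image continuous_fst)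
  intro s hs
  by_contra h
  exact hs ⟨(s, t), subset_tsupport v h, rfl⟩

-- FTC bound in second variable
lemma ftc2 (u : EuclideanSpace ℝ (Fin 2) → ℝ)
    (hu : ContDiff ℝ 1 u) (hsupp : HasCompactSupport u) (s t : ℝ) :
    (‖u (kappa (s, t))‖₊ : ℝ≥0∞) ≤ ∫⁻ r, (‖fderiv ℝ u (kappa (s, r))‖₊ : ℝ≥0∞) := by
  set v : ℝ × ℝ → ℝ := u ∘ kappa with hv
  have hvc : ContDiff ℝ 1 v := hu.comp kappa.contDiff
  have hvs : HasCompactSupport v := hsupp.comp_homeomorph kappa.toHomeomorph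
  have hf : ContDiff ℝ 1 (fun r => v (s, r)) :=
    hvc.comp ((contDiff_const (c := s)).prodMk contDiff_id)
  have hfs : HasCompactSupport (fun r => v (s, r)) := slice_cs hvs s
  calc (‖v (s, t)‖₊ : ℝ≥0∞)
      ≤ ∫⁻ r in Iic t, ‖deriv (fun r => v (s, r)) r‖₊ :=
        HasCompactSupport.enorm_le_lintegral_Ici_deriv hf hfs t
    _ ≤ ∫⁻ r, ‖deriv (fun r => v (s, r)) r‖₊ :=
        lintegral_mono' Measure.restrict_le_self le_rfl
    _ ≤ ∫⁻ r, (‖fderiv ℝ u (kappa (s, r))‖₊ : ℝ≥0∞) := by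
        apply lintegral_mono
        intro r
        have h1 : HasDerivAt (fun r : ℝ => (s, r)) ((0 : ℝ), (1 : ℝ)) r :=
          (hasDerivAt_const r s).prodMk (hasDerivAt_id r)
        have h2 : HasDerivAt (fun r => v (s, r)) (fderiv ℝ v (s, r) (0, 1)) r := by
          have := ((hvc.differentiable one_ne_zero) (s, r)).hasFDerivAt
          exact this.comp_hasDerivAt r h1
        simp only []
        rw [show deriv (fun r => v (s, r)) r = fderiv ℝ v (s, r) (0, 1) from h2.deriv]
        have h3 : fderiv ℝ v (s, r) = (fderiv ℝ u (kappa (s, r))).comp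
            (kappa : (ℝ × ℝ) →L[ℝ] EuclideanSpace ℝ (Fin 2)) := by
          rw [hv]
          rw [fderiv_comp _ ((hu.differentiable one_ne_zero) _) (kappa.differentiableAt)]
          congr 1
          exact kappa.fderiv
        rw [h3]
        simp only [ContinuousLinearMap.comp_apply, ContinuousLinearEquiv.coe_coe]
        have h4 : ‖kappa ((0:ℝ), (1:ℝ))‖ = 1 := by
          have : kappa (0,1) = EuclideanSpace.single (1 : Fin 2) (1:ℝ) := by
            ext i; fin_cases i <;> simp [kappa, EuclideanSpace.single]
          rw [this, EuclideanSpace.norm_single]; simp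
        have h5 : ‖kappa ((0:ℝ),(1:ℝ))‖₊ = 1 := by ext; exact h4
        have hb : ‖fderiv ℝ u (kappa (s, r)) (kappa (0, 1))‖₊
            ≤ ‖fderiv ℝ u (kappa (s, r))‖₊ := by
          have := (fderiv ℝ u (kappa (s, r))).le_opNNNorm (kappa (0, 1))
          simpa [h5] using this
        exact ENNReal.coe_le_coe.mpr hb
-- FTC bound in first variable
lemma ftc1 (u : EuclideanSpace ℝ (Fin 2) → ℝ)
    (hu : ContDiff ℝ 1 u) (hsupp : HasCompactSupport u) (s t : ℝ) :
    (‖u (kappa (s, t))‖₊ : ℝ≥0∞) ≤ ∫⁻ r, (‖fderiv ℝ u (kappa (r, t))‖₊ : ℝ≥0∞) := by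
  set v : ℝ × ℝ → ℝ := u ∘ kappa with hv
  have hvc : ContDiff ℝ 1 v := hu.comp kappa.contDiff
  have hvs : HasCompactSupport v := hsupp.comp_homeomorph kappa.toHomeomorph
  have hf : ContDiff ℝ 1 (fun r => v (r, t)) :=
    hvc.comp (contDiff_id.prodMk (contDiff_const (c := t)))
  have hfs : HasCompactSupport (fun r => v (r, t)) := slice_cs' hvs t
  calc (‖v (s, t)‖₊ : ℝ≥0∞)
      ≤ ∫⁻ r in Iic s, ‖deriv (fun r => v (r, t)) r‖₊ :=
        HasCompactSupport.enorm_le_lintegral_Ici_deriv hf hfs s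
    _ ≤ ∫⁻ r, ‖deriv (fun r => v (r, t)) r‖₊ :=
        lintegral_mono' Measure.restrict_le_self le_rfl
    _ ≤ ∫⁻ r, (‖fderiv ℝ u (kappa (r, t))‖₊ : ℝ≥0∞) := by
        apply lintegral_mono
        intro r
        have h1 : HasDerivAt (fun r : ℝ => (r, t)) ((1 : ℝ), (0 : ℝ)) r :=
          (hasDerivAt_id r).prodMk (hasDerivAt_const r t)
        have h2 : HasDerivAt (fun r => v (r, t)) (fderiv ℝ v (r, t) (1, 0)) r :=
          ((hvc.differentiable one_ne_zero) (r, t)).hasFDerivAt.comp_hasDerivAt r h1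
        simp only []
        rw [show deriv (fun r => v (r, t)) r = fderiv ℝ v (r, t) (1, 0) from h2.deriv]
        have h3 : fderiv ℝ v (r, t) = (fderiv ℝ u (kappa (r, t))).comp
            (kappa : (ℝ × ℝ) →L[ℝ] EuclideanSpace ℝ (Fin 2)) := by
          rw [hv]
          rw [fderiv_comp _ ((hu.differentiable one_ne_zero) _) (kappa.differentiableAt)]
          congr 1
          exact kappa.fderiv
        rw [h3]
        simp only [ContinuousLinearMap.comp_apply, ContinuousLinearEquiv.coe_coe]
        have h4 : ‖kappa ((1:ℝ), (0:ℝ))‖ = 1 := by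
          have : kappa (1,0) = EuclideanSpace.single (0 : Fin 2) (1:ℝ) := by
            ext i; fin_cases i <;> simp [kappa, EuclideanSpace.single]
          rw [this, EuclideanSpace.norm_single]; simp
        have h5 : ‖kappa ((1:ℝ),(0:ℝ))‖₊ = 1 := by ext; exact h4
        have hb : ‖fderiv ℝ u (kappa (r, t)) (kappa (1, 0))‖₊
            ≤ ‖fderiv ℝ u (kappa (r, t))‖₊ := by
          have := (fderiv ℝ u (kappa (r, t))).le_opNNNorm (kappa (1, 0))
          simpa [h5] using this
        exact ENNReal.coe_le_coe.mpr hb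

/-- Gagliardo–Nirenberg–Sobolev inequality in dimension 2 with `p = 1` (so `p* = 2`),
with constant `C = 1`: for a compactly supported `C¹` function `u : ℝ² → ℝ`,
`‖u‖_{L²} ≤ ‖∇u‖_{L¹}`. -/
theorem gagliardo_nirenberg_sobolev_dim_two
    (u : EuclideanSpace ℝ (Fin 2) → ℝ)
    (hu : ContDiff ℝ 1 u) (hsupp : HasCompactSupport u) :
    Real.sqrt (∫ x, u x ^ 2) ≤ ∫ x, ‖fderiv ℝ u x‖ := by
  have mp : MeasurePreserving (kappa : ℝ × ℝ → EuclideanSpace ℝ (Fin 2))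
      ((volume : Measure ℝ).prod volume) volume := by
    have h1 := (EuclideanSpace.volume_preserving_symm_measurableEquiv_toLp (Fin 2)).symm
    have h2 := (volume_preserving_finTwoArrow ℝ).symm
    exact h1.comp h2
  set g : EuclideanSpace ℝ (Fin 2) → ℝ≥0∞ := fun x => (‖fderiv ℝ u x‖₊ : ℝ≥0∞) with hg
  have hfc : Continuous (fderiv ℝ u) := hu.continuous_fderiv one_ne_zero
  have hgm : Measurable g := hfc.nnnorm.measurable.coe_nnreal_ennreal
  set G : ℝ × ℝ → ℝ≥0∞ := fun p => g (kappa p) with hG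
  have hGm : Measurable G := hgm.comp kappa.continuous.measurable
  set I : ℝ≥0∞ := ∫⁻ x, g x with hI
  -- integral of G over product = I
  have hGI : ∫⁻ p, G p ∂((volume : Measure ℝ).prod volume) = I := mp.lintegral_comp hgm
  -- key pointwise bound and Fubini
  have key : ∫⁻ x, (‖u x‖₊ : ℝ≥0∞) ^ 2 ≤ I ^ 2 := by
    rw [← mp.lintegral_comp ((hu.continuous.nnnorm.measurable.coe_nnreal_ennreal).pow_const 2)]
    have hGm' : Measurable (Function.uncurry fun s t : ℝ => G (s, t)) := hGm
    have f1m : Measurable fun s : ℝ => ∫⁻ t, G (s, t) :=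
      hGm'.lintegral_prod_right
    have f2m : Measurable fun t : ℝ => ∫⁻ s, G (s, t) :=
      hGm'.lintegral_prod_left
    calc ∫⁻ p, (‖u (kappa p)‖₊ : ℝ≥0∞) ^ 2 ∂((volume : Measure ℝ).prod volume)
        ≤ ∫⁻ p, (∫⁻ t, G (p.1, t)) * (∫⁻ s, G (s, p.2))
            ∂((volume : Measure ℝ).prod volume) := by
          apply lintegral_mono
          rintro ⟨s, t⟩
          have hA := ftc2 u hu hsupp s t
          have hB := ftc1 u hu hsupp s t
          calc (‖u (kappa (s, t))‖₊ : ℝ≥0∞) ^ 2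
              = (‖u (kappa (s, t))‖₊ : ℝ≥0∞) * (‖u (kappa (s, t))‖₊ : ℝ≥0∞) := sq _
            _ ≤ (∫⁻ r, G (s, r)) * (∫⁻ r, G (r, t)) := mul_le_mul' hA hB
      _ = (∫⁻ s, ∫⁻ t, G (s, t)) * (∫⁻ t, ∫⁻ s, G (s, t)) :=
          lintegral_prod_mul f1m.aemeasurable f2m.aemeasurable
      _ = I * I := by
          rw [← lintegral_prod _ hGm.aemeasurable, ← lintegral_prod_symm _ hGm.aemeasurable,
            hGI]
      _ = I ^ 2 := (sq I).symm
  -- finiteness of I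
  have hgint : Integrable (fun x => ‖fderiv ℝ u x‖) :=
    (hfc.norm.integrable_of_hasCompactSupport ((hsupp.fderiv (𝕜 := ℝ)).norm))
  have hIfin : I ≠ ∞ := by
    have := hgint.2
    rw [HasFiniteIntegral] at this
    simp only [enorm_norm] at this
    exact this.ne
  -- convert RHS
  have hRHS : ∫ x, ‖fderiv ℝ u x‖ = I.toReal := by
    rw [integral_eq_lintegral_of_nonneg_ae (Filter.Eventually.of_forall fun x => norm_nonneg _)
      hfc.norm.aestronglyMeasurable]
    congr 1
    apply lintegral_congr
    intro x
    rw [ofReal_norm, enorm_eq_nnnorm]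
  -- convert LHS
  have hLHS : ∫ x, u x ^ 2 = (∫⁻ x, (‖u x‖₊ : ℝ≥0∞) ^ 2).toReal := by
    rw [integral_eq_lintegral_of_nonneg_ae (Filter.Eventually.of_forall fun x => sq_nonneg _)
      ((hu.continuous.pow 2).aestronglyMeasurable)]
    congr 1
    apply lintegral_congr
    intro x
    rw [show u x ^ 2 = |u x| ^ 2 by rw [sq_abs], ENNReal.ofReal_pow (abs_nonneg _)]
    congr 1
    rw [← Real.norm_eq_abs, ofReal_norm, enorm_eq_nnnorm]
  rw [hLHS, hRHS]
  have h1 : (∫⁻ x, (‖u x‖₊ : ℝ≥0∞) ^ 2).toReal ≤ (I ^ 2).toReal :=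
    ENNReal.toReal_mono (ENNReal.pow_ne_top hIfin) key
  calc Real.sqrt (∫⁻ x, (‖u x‖₊ : ℝ≥0∞) ^ 2).toReal
      ≤ Real.sqrt ((I ^ 2).toReal) := Real.sqrt_le_sqrt h1
    _ = I.toReal := by
        rw [ENNReal.toReal_pow, Real.sqrt_sq ENNReal.toReal_nonneg]
end
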